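/- Merging two products cannot decrease the expected maximum load: for every T ∈ ℕ, every k ≥ 2, and every vector of positive weights (w_1,…,w_k), one has E_T((w_1 + w_2, w_3,…,w_k)) ≥ E_T((w_1,…,w_k)). -/

import Mathlib

open Finset

/-- MNL choice probability for a single customer offered products with weights `w`:
outcome `some i` (select product `i`) has probability `w i / (1 + ∑ j, w j)`, and
outcome `none` (no purchase) has probability `1 / (1 + ∑ j, w j)`. -/
noncomputable def mnlProb {k : ℕ} (w : Fin k → ℝ) : Option (Fin k) → ℝ
  | none => 1 / (1 + ∑ j, w j)
  | some i => w i / (1 + ∑ j, w j)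

/-- The load of product `i`: the number of customers `t` selecting product `i`,
given the outcome `f` of the `T` customers' choices. -/
def loadCount {k T : ℕ} (f : Fin T → Option (Fin k)) (i : Fin k) : ℕ :=
  (Finset.univ.filter fun t => f t = some i).card

/-- `ET T k w` is the expected maximum load when products with weights `w 0, …, w (k-1)`
are statically offered to `T` customers making independent MNL choices; the loads form
a multinomial random vector. -/
noncomputable def ET (T k : ℕ) (w : Fin k → ℝ) : ℝ :=
  ∑ f : Fin T → Option (Fin k),
    (∏ t, mnlProb w (f t)) * ((Finset.univ.sup (loadCount f) : ℕ) : ℝ)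

/-- merge the first two indices -/
def merge2 {k : ℕ} : Fin (k + 2) → Fin (k + 1) :=
  Fin.cases 0 (Fin.cases 0 Fin.succ)

lemma merge2_zero {k : ℕ} : (merge2 (0 : Fin (k + 2))) = 0 := rfl

lemma merge2_one {k : ℕ} : (merge2 (1 : Fin (k + 2))) = 0 := by
  have h : (1 : Fin (k+2)) = Fin.succ 0 := rfl
  rw [h]
  unfold merge2
  rw [Fin.cases_succ, Fin.cases_zero]

lemma merge2_succ_succ {k : ℕ} (i : Fin k) : merge2 i.succ.succ = i.succ := by
  simp [merge2]

lemma sum_w_eq {k : ℕ} (w : Fin (k + 2) → ℝ) :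
    (∑ j, Fin.cons (w 0 + w 1) (fun i : Fin k => w i.succ.succ) j) = ∑ j, w j := by
  rw [Fin.sum_cons, Fin.sum_univ_succ (f := w), Fin.sum_univ_succ (f := fun i : Fin (k+1) => w i.succ)]
  have h1 : ((0 : Fin (k+1)).succ) = (1 : Fin (k+2)) := rfl
  rw [h1, add_assoc]

lemma sum_fiber {k : ℕ} (w : Fin (k + 2) → ℝ) (y : Option (Fin (k + 1))) :
    (∑ x : Option (Fin (k + 2)),
      (if Option.map merge2 x = y then mnlProb w x else 0)) =
      mnlProb (Fin.cons (w 0 + w 1) fun i : Fin k => w i.succ.succ) y := by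
  set w' : Fin (k+1) → ℝ := Fin.cons (w 0 + w 1) fun i : Fin k => w i.succ.succ with hw'
  have hS : (∑ j, w' j) = ∑ j, w j := sum_w_eq w
  rw [Fintype.sum_option]
  rw [Fin.sum_univ_succ, Fin.sum_univ_succ]
  simp only [Option.map_none, Option.map_some, merge2_zero, merge2_succ_succ]
  have h01 : merge2 ((0 : Fin (k+1)).succ) = (0 : Fin (k+1)) := merge2_one
  simp only [h01]
  match y with
  | none =>
    simp [mnlProb, hS]
  | some j =>
    induction j using Fin.cases with
    | zero =>
      have : ∀ i : Fin k, ((some i.succ : Option (Fin (k+1))) = some 0) = False := by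
        intro i; simp [Fin.succ_ne_zero]
      simp only [this, if_false, Finset.sum_const_zero, add_zero]
      simp [mnlProb, hS, hw', (by simpa [hw'] using hS : w 0 + w 1 + ∑ i : Fin k, w i.succ.succ = ∑ j, w j), add_div]
    | succ j =>
      have h0 : ((some (0:Fin (k+1)) : Option (Fin (k+1))) = some j.succ) = False := by
        simp [(Fin.succ_ne_zero j).symm]
      simp only [h0, if_false, Option.some.injEq, Fin.succ_inj, zero_add]
      rw [Finset.sum_ite_eq' Finset.univ j (fun i : Fin k => mnlProb w (some i.succ.succ))]
      simp [mnlProb, hS, hw', (by simpa [hw'] using hS : w 0 + w 1 + ∑ i : Fin k, w i.succ.succ = ∑ j, w j)]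

lemma mnl_nonneg {k : ℕ} (w : Fin k → ℝ) (hw : ∀ i, 0 < w i) (x : Option (Fin k)) :
    0 ≤ mnlProb w x := by
  have hd : (0:ℝ) < 1 + ∑ j, w j := by
    have : (0:ℝ) ≤ ∑ j, w j := Finset.sum_nonneg fun j _ => (hw j).le
    linarith
  cases x with
  | none => exact div_nonneg zero_le_one hd.le
  | some i => exact div_nonneg (hw i).le hd.le

lemma sup_load_le {k T : ℕ} (f : Fin T → Option (Fin (k + 2))) :
    Finset.univ.sup (loadCount f) ≤
      Finset.univ.sup (loadCount fun t => Option.map merge2 (f t)) := by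
  apply Finset.sup_le
  intro i _
  refine le_trans ?_ (Finset.le_sup (Finset.mem_univ (merge2 i)))
  apply Finset.card_le_card
  intro t ht
  simp only [Finset.mem_filter, Finset.mem_univ, true_and] at *
  rw [ht]; rfl

theorem merge_does_not_decrease_expected_max_load
    (T k : ℕ) (w : Fin (k + 2) → ℝ) (hw : ∀ i, 0 < w i) :
    ET T (k + 1) (Fin.cons (w 0 + w 1) fun i : Fin k => w i.succ.succ) ≥
      ET T (k + 2) w := by
  set w' : Fin (k+1) → ℝ := Fin.cons (w 0 + w 1) fun i : Fin k => w i.succ.succ with hw'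
  have key : ET T (k+1) w' =
      ∑ f : Fin T → Option (Fin (k+2)),
        (∏ t, mnlProb w (f t)) *
          ((Finset.univ.sup (loadCount fun t => Option.map merge2 (f t)) : ℕ) : ℝ) := by
    rw [← Finset.sum_fiberwise Finset.univ
      (fun f : Fin T → Option (Fin (k+2)) => fun t => Option.map merge2 (f t))
      (fun f => (∏ t, mnlProb w (f t)) *
        ((Finset.univ.sup (loadCount fun t => Option.map merge2 (f t)) : ℕ) : ℝ))]
    rw [ET]
    apply Finset.sum_congr rfl
    intro g _
    have hcongr : ∀ f ∈ Finset.univ.filter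
        (fun f : Fin T → Option (Fin (k+2)) => (fun t => Option.map merge2 (f t)) = g),
        (∏ t, mnlProb w (f t)) *
          ((Finset.univ.sup (loadCount fun t => Option.map merge2 (f t)) : ℕ) : ℝ) =
        (∏ t, mnlProb w (f t)) * ((Finset.univ.sup (loadCount g) : ℕ) : ℝ) := by
      intro f hf
      rw [Finset.mem_filter] at hf
      rw [hf.2]
    rw [Finset.sum_congr rfl hcongr, ← Finset.sum_mul]
    congr 1
    symm
    calc (∑ f ∈ Finset.univ.filter
        (fun f : Fin T → Option (Fin (k+2)) => (fun t => Option.map merge2 (f t)) = g),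
          ∏ t, mnlProb w (f t))
        = ∑ f : Fin T → Option (Fin (k+2)),
            if (∀ t, Option.map merge2 (f t) = g t) then ∏ t, mnlProb w (f t) else 0 := by
          rw [Finset.sum_filter]
          apply Finset.sum_congr rfl
          intro f _
          simp only [funext_iff]
      _ = ∑ f : Fin T → Option (Fin (k+2)),
            ∏ t, (if Option.map merge2 (f t) = g t then mnlProb w (f t) else 0) := by
          apply Finset.sum_congr rfl
          intro f _
          rw [Fintype.prod_ite_zero]
          congr!
      _ = ∏ t, ∑ x : Option (Fin (k+2)),
            (if Option.map merge2 x = g t then mnlProb w x else 0) := by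
          rw [Finset.prod_univ_sum (fun _ : Fin T => (Finset.univ : Finset (Option (Fin (k+2)))))
            (fun t x => if Option.map merge2 x = g t then mnlProb w x else 0),
            Fintype.piFinset_univ]
      _ = ∏ t, mnlProb w' (g t) := by
          apply Finset.prod_congr rfl
          intro t _
          rw [sum_fiber, hw']
  rw [key, ET, ge_iff_le]
  apply Finset.sum_le_sum
  intro f _
  apply mul_le_mul_of_nonneg_left
  · exact_mod_cast sup_load_le f
  · exact Finset.prod_nonneg fun t _ => mnl_nonneg w hw (f t)
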